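/- The family of solutions (u_h) of the schemes G^v_{ε,h}(u_h,·) = 0 is uniformly bounded: there is a constant C depending only on d, λ, Λ, ‖f‖_{L^∞(Ω)}, ‖g‖_{L^∞(∂Ω)}, and the diameter of Ω (but not on h, ε ∈ (0,1), or v), such that sup_h max_{x ∈ Ω̄_h} |u_h(x)| ≤ C. -/

import Mathlib

/-- `i`-th coordinate direction in `ℝ^d`. -/
def gridDir {d : ℕ} (i : Fin d) : Fin d → ℝ := Pi.single i 1

lemma sq1 {d : ℕ} (x : Fin d → ℝ) (i : Fin d) (c : ℝ) :
    ∑ k, ((x + c • gridDir i) k) ^ 2 = (∑ k, x k ^ 2) + (2 * c * x i + c ^ 2) := by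
  have key : ∀ k, ((x + c • gridDir i) k) ^ 2
      = x k ^ 2 + (if k = i then 2 * c * x i + c ^ 2 else 0) := by
    intro k
    rcases eq_or_ne k i with rfl | hk
    · simp [gridDir, Pi.single_apply]; ring
    · simp [gridDir, Pi.single_apply, hk]
  simp_rw [key, Finset.sum_add_distrib, Finset.sum_ite_eq' Finset.univ i, Finset.mem_univ,
    if_true]

lemma sq2 {d : ℕ} (x : Fin d → ℝ) {i j : Fin d} (hij : i ≠ j) (c c' : ℝ) :
    ∑ k, ((x + c • gridDir i + c' • gridDir j) k) ^ 2
      = (∑ k, x k ^ 2) + (2 * c * x i + c ^ 2) + (2 * c' * x j + c' ^ 2) := by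
  have : x + c • gridDir i + c' • gridDir j = (x + c • gridDir i) + c' • gridDir j := rfl
  rw [sq1 (x + c • gridDir i) j c', sq1 x i c]
  have : (x + c • gridDir i) j = x j := by
    simp [gridDir, Pi.single_apply, hij.symm]
  rw [this]

/-- Centred finite-difference discretisation of the Hessian on a uniform grid of size `h`. -/
noncomputable def discHess {d : ℕ} (h : ℝ) (u : (Fin d → ℝ) → ℝ) (x : Fin d → ℝ) :
    Matrix (Fin d) (Fin d) ℝ :=
  Matrix.of fun i j =>
    if i = j then
      (u (x + h • gridDir i) + u (x - h • gridDir i) - 2 * u x) / h ^ 2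
    else
      (-2 * u x + u (x + h • gridDir i - h • gridDir j) + u (x - h • gridDir i + h • gridDir j)
          + u (x + h • gridDir i) + u (x - h • gridDir i)
          + u (x + h • gridDir j) + u (x - h • gridDir j)) / (2 * h ^ 2)

lemma discHess_quad {d : ℕ} {h : ℝ} (hh : h ≠ 0) (a : ℝ) (x : Fin d → ℝ) :
    discHess h (fun y => a * ((∑ k, y k ^ 2) - (∑ k, x k ^ 2) - 2 * h ^ 2)) x
      = (2 * a) • (1 : Matrix (Fin d) (Fin d) ℝ) := by
  have e1 : ∀ i : Fin d, x - h • gridDir i = x + (-h) • gridDir i := by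
    intro i; ext k; simp [sub_eq_add_neg]
  have e2 : ∀ i j : Fin d, x + h • gridDir i - h • gridDir j
      = x + h • gridDir i + (-h) • gridDir j := by
    intro i j; ext k; simp [sub_eq_add_neg]
  have e3 : ∀ i j : Fin d, x - h • gridDir i + h • gridDir j
      = x + (-h) • gridDir i + h • gridDir j := by
    intro i j; ext k; simp [sub_eq_add_neg]
  ext i j
  rcases eq_or_ne i j with rfl | hij
  · simp only [discHess, Matrix.of_apply, if_pos rfl, e1, sq1, Matrix.smul_apply,
      Matrix.one_apply_eq, smul_eq_mul, mul_one, if_true, ↓reduceIte]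
    field_simp
    ring
  · simp only [discHess, Matrix.of_apply, if_neg hij, e1, e2, e3]
    rw [sq2 x hij h (-h), sq2 x hij (-h) h]
    simp only [sq1, Matrix.smul_apply, Matrix.one_apply_ne hij, smul_eq_mul, mul_zero]
    field_simp
    ring

/-- (λ,Λ)-uniform ellipticity, with the size of a PSD matrix measured by its trace. -/
def UniformlyElliptic {d : ℕ} (l L : ℝ) (F : Matrix (Fin d) (Fin d) ℝ → ℝ) : Prop :=
  ∀ M N : Matrix (Fin d) (Fin d) ℝ, M.IsSymm → N.PosSemidef →
    l * N.trace ≤ F M - F (M + N) ∧ F M - F (M + N) ≤ L * N.trace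

lemma smul_one_symm {d : ℕ} (a : ℝ) : ((a • (1 : Matrix (Fin d) (Fin d) ℝ))).IsSymm :=
  Matrix.isSymm_one.smul a

lemma smul_one_psd {d : ℕ} {a : ℝ} (ha : 0 ≤ a) :
    ((a • (1 : Matrix (Fin d) (Fin d) ℝ))).PosSemidef := by
  rw [Matrix.smul_one_eq_diagonal]
  exact Matrix.PosSemidef.diagonal fun _ => ha

lemma smul_one_trace {d : ℕ} (a : ℝ) :
    ((a • (1 : Matrix (Fin d) (Fin d) ℝ))).trace = a * d := by
  simp [Matrix.trace_smul, Matrix.trace_one, smul_eq_mul]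

lemma F_pos_at_neg {d : ℕ} {l L : ℝ} {F : Matrix (Fin d) (Fin d) ℝ → ℝ}
    (hF : UniformlyElliptic l L F) (hF0 : F 0 = 0) {a : ℝ} (ha : 0 ≤ a) :
    l * (a * d) ≤ F ((-a) • (1 : Matrix (Fin d) (Fin d) ℝ)) := by
  have := (hF ((-a) • 1) (a • 1) (smul_one_symm _) (smul_one_psd ha)).1
  have hsum : ((-a) • (1 : Matrix (Fin d) (Fin d) ℝ)) + a • 1 = 0 := by
    rw [← add_smul]; simp
  rw [hsum, hF0, smul_one_trace] at this
  linarith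

lemma F_neg_at_pos {d : ℕ} {l L : ℝ} {F : Matrix (Fin d) (Fin d) ℝ → ℝ}
    (hF : UniformlyElliptic l L F) (hF0 : F 0 = 0) {a : ℝ} (ha : 0 ≤ a) :
    F (a • (1 : Matrix (Fin d) (Fin d) ℝ)) ≤ -(l * (a * d)) := by
  have := (hF 0 (a • 1) (Matrix.isSymm_zero) (smul_one_psd ha)).1
  rw [hF0, zero_add, smul_one_trace] at this
  linarith

/-- the solutions u_h of the schemes G^v_{ε,h}(u_h,·) = 0 are uniformly
bounded: there is a constant C depending only on d, λ, Λ, ‖f‖_∞, ‖g‖_∞ and the diameter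
of Ω — but not on h, ε ∈ (0,1) or v — such that sup_h max_{Ω̄_h} |u_h| ≤ C. -/
theorem stmt_10 {d : ℕ} (hd : 0 < d) (l L : ℝ) (hl : 0 < l) (hlL : l ≤ L)
    (Mf Mg R : ℝ) (hMf : 0 ≤ Mf) (hMg : 0 ≤ Mg) (hR : 0 ≤ R) :
    ∃ C : ℝ, ∀ (ε h : ℝ), ε ∈ Set.Ioo (0 : ℝ) 1 → 0 < h →
      ∀ (Ωint Ωbd : Finset (Fin d → ℝ)),
      (∀ x : Fin d → ℝ, (x ∈ Ωint ∨ x ∈ Ωbd) → ∑ i, (x i) ^ 2 ≤ R ^ 2) →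
      ∀ F₁ F₂ : Matrix (Fin d) (Fin d) ℝ → ℝ,
      UniformlyElliptic l L F₁ → UniformlyElliptic l L F₂ → F₁ 0 = 0 → F₂ 0 = 0 →
      (∀ (p q : (Fin d → ℝ) → ℝ), ∀ x ∈ Ωint,
        (∀ y : Fin d → ℝ, (y ∈ Ωint ∨ y ∈ Ωbd) → p y - q y ≤ p x - q x) →
        F₁ (discHess h q x) ≤ F₁ (discHess h p x) ∧
        F₂ (discHess h q x) ≤ F₂ (discHess h p x)) →
      ∀ hv f g u : (Fin d → ℝ) → ℝ,
      (∀ x, hv x ∈ Set.Icc (0 : ℝ) 1) →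
      (∀ x ∈ Ωint, |f x| ≤ Mf) → (∀ x ∈ Ωbd, |g x| ≤ Mg) →
      (∀ x ∈ Ωint,
        ε * u x + hv x * F₁ (discHess h u x) + (1 - hv x) * F₂ (discHess h u x) - f x = 0) →
      (∀ x ∈ Ωbd, u x = g x) →
      ∀ x : Fin d → ℝ, (x ∈ Ωint ∨ x ∈ Ωbd) → |u x| ≤ C := by
  refine ⟨Mg + Mf / (2 * d * l) * R ^ 2, ?_⟩
  intro ε h hε hh Ωint Ωbd hΩR F₁ F₂ hF₁ hF₂ hF₁0 hF₂0 hmono hv f g u hhv hf hg hsch hbc x hx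
  have hd0 : (0:ℝ) < (d:ℝ) := by exact_mod_cast hd
  set K : ℝ := Mf / (2 * d * l) with hK
  have hK0 : 0 ≤ K := by positivity
  have h2K0 : (0:ℝ) ≤ 2 * K := by linarith
  have hKMf : l * (2 * K * (d:ℝ)) = Mf := by rw [hK]; field_simp
  have hS : x ∈ Ωint ∪ Ωbd := Finset.mem_union.mpr hx
  have hmem : ∀ y ∈ Ωint ∪ Ωbd, (y ∈ Ωint ∨ y ∈ Ωbd) := fun y hy => Finset.mem_union.mp hy
  have hxpos : (0:ℝ) ≤ ∑ k, x k ^ 2 := Finset.sum_nonneg fun k _ => sq_nonneg _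
  have upper : u x ≤ Mg + K * R ^ 2 := by
    obtain ⟨x₀, hx₀S, hx₀⟩ := Finset.exists_max_image (Ωint ∪ Ωbd)
      (fun y => u y + K * ∑ k, y k ^ 2) ⟨x, hS⟩
    have hx₀b : u x₀ ≤ Mg := by
      rcases Finset.mem_union.mp hx₀S with hint | hbd
      · have hcond : ∀ y : Fin d → ℝ, (y ∈ Ωint ∨ y ∈ Ωbd) →
            u y - (fun y => (-K) * ((∑ k, y k ^ 2) - (∑ k, x₀ k ^ 2) - 2 * h ^ 2)) y
              ≤ u x₀ - (fun y => (-K) * ((∑ k, y k ^ 2) - (∑ k, x₀ k ^ 2) - 2 * h ^ 2)) x₀ := by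
          intro y hy
          have h5 : u y + K * ∑ k, y k ^ 2 ≤ u x₀ + K * ∑ k, x₀ k ^ 2 :=
            hx₀ y (Finset.mem_union.mpr hy)
          dsimp only
          nlinarith [h5]
        obtain ⟨m1, m2⟩ := hmono u
          (fun y => (-K) * ((∑ k, y k ^ 2) - (∑ k, x₀ k ^ 2) - 2 * h ^ 2)) x₀ hint hcond
        rw [discHess_quad (ne_of_gt hh)] at m1 m2
        have e1 : Mf ≤ F₁ ((2 * (-K)) • 1) := by
          rw [show ((2 * (-K)):ℝ) = -(2*K) by ring, ← hKMf]
          exact F_pos_at_neg hF₁ hF₁0 h2K0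
        have e2 : Mf ≤ F₂ ((2 * (-K)) • 1) := by
          rw [show ((2 * (-K)):ℝ) = -(2*K) by ring, ← hKMf]
          exact F_pos_at_neg hF₂ hF₂0 h2K0
        have heq := hsch x₀ hint
        have hfb := (abs_le.mp (hf x₀ hint)).2
        obtain ⟨hv0, hv1⟩ := hhv x₀
        have h1 : hv x₀ * Mf ≤ hv x₀ * F₁ (discHess h u x₀) :=
          mul_le_mul_of_nonneg_left (le_trans e1 m1) hv0
        have h2 : (1 - hv x₀) * Mf ≤ (1 - hv x₀) * F₂ (discHess h u x₀) :=
          mul_le_mul_of_nonneg_left (le_trans e2 m2) (by linarith)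
        have hsum : hv x₀ * Mf + (1 - hv x₀) * Mf = Mf := by ring
        have hεu : ε * u x₀ ≤ 0 := by linarith
        nlinarith [hε.1]
      · rw [hbc x₀ hbd]; exact (abs_le.mp (hg x₀ hbd)).2
    have hmax : u x + K * ∑ k, x k ^ 2 ≤ u x₀ + K * ∑ k, x₀ k ^ 2 := hx₀ x hS
    have hR₀ := hΩR x₀ (hmem _ hx₀S)
    linarith [mul_le_mul_of_nonneg_left hR₀ hK0, mul_nonneg hK0 hxpos]
  have lower : -(Mg + K * R ^ 2) ≤ u x := by
    obtain ⟨x₁, hx₁S, hx₁⟩ := Finset.exists_min_image (Ωint ∪ Ωbd)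
      (fun y => u y - K * ∑ k, y k ^ 2) ⟨x, hS⟩
    have hx₁b : -Mg ≤ u x₁ := by
      rcases Finset.mem_union.mp hx₁S with hint | hbd
      · have hcond : ∀ y : Fin d → ℝ, (y ∈ Ωint ∨ y ∈ Ωbd) →
            (fun y => K * ((∑ k, y k ^ 2) - (∑ k, x₁ k ^ 2) - 2 * h ^ 2)) y - u y
              ≤ (fun y => K * ((∑ k, y k ^ 2) - (∑ k, x₁ k ^ 2) - 2 * h ^ 2)) x₁ - u x₁ := by
          intro y hy
          have h5 : u x₁ - K * ∑ k, x₁ k ^ 2 ≤ u y - K * ∑ k, y k ^ 2 :=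
            hx₁ y (Finset.mem_union.mpr hy)
          dsimp only
          nlinarith [h5]
        obtain ⟨m1, m2⟩ := hmono
          (fun y => K * ((∑ k, y k ^ 2) - (∑ k, x₁ k ^ 2) - 2 * h ^ 2)) u x₁ hint hcond
        rw [discHess_quad (ne_of_gt hh)] at m1 m2
        have e1 : F₁ ((2 * K) • 1) ≤ -Mf := by
          rw [← hKMf]
          exact F_neg_at_pos hF₁ hF₁0 h2K0
        have e2 : F₂ ((2 * K) • 1) ≤ -Mf := by
          rw [← hKMf]
          exact F_neg_at_pos hF₂ hF₂0 h2K0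
        have heq := hsch x₁ hint
        have hfb := (abs_le.mp (hf x₁ hint)).1
        obtain ⟨hv0, hv1⟩ := hhv x₁
        have h1 : hv x₁ * F₁ (discHess h u x₁) ≤ hv x₁ * (-Mf) :=
          mul_le_mul_of_nonneg_left (le_trans m1 e1) hv0
        have h2 : (1 - hv x₁) * F₂ (discHess h u x₁) ≤ (1 - hv x₁) * (-Mf) :=
          mul_le_mul_of_nonneg_left (le_trans m2 e2) (by linarith)
        have hsum : hv x₁ * (-Mf) + (1 - hv x₁) * (-Mf) = -Mf := by ring
        have hεu : 0 ≤ ε * u x₁ := by linarith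
        nlinarith [hε.1]
      · rw [hbc x₁ hbd]; exact (abs_le.mp (hg x₁ hbd)).1
    have hmin : u x₁ - K * ∑ k, x₁ k ^ 2 ≤ u x - K * ∑ k, x k ^ 2 := hx₁ x hS
    have hR₁ := hΩR x₁ (hmem _ hx₁S)
    linarith [mul_le_mul_of_nonneg_left hR₁ hK0, mul_nonneg hK0 hxpos]
  rw [abs_le]
  exact ⟨lower, upper⟩
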